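/- (Unbiasedness of the subgraph-density moment estimator with known error rates.) Under the noisy network model, let 𝒱 be a subgraph index set with parameters k and τ₁,…,τ_k ∈ {0,1}, and define the estimator T̃_𝒱 = |𝒱|^{-1} Σ_{v=(i₁,i₁′,…,i_k,i_k′)∈𝒱} Π_{ℓ=1}^k φ_ℓ(Y_{i_ℓ,i_ℓ′}) with φ_ℓ(x) = (x−α)^{τ_ℓ}(1−β−x)^{1−τ_ℓ}, and the subgraph density C_𝒱 = |𝒱|^{-1} Σ_{v∈𝒱} Π_{ℓ=1}^k A_{i_ℓ,i_ℓ′}^{τ_ℓ}(1−A_{i_ℓ,i_ℓ′})^{1−τ_ℓ}. Then E(T̃_𝒱) = (1−α−β)^k · C_𝒱. -/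

import Mathlib

open MeasureTheory ProbabilityTheory Finset

/-- Index set of unordered vertex pairs, encoded as ordered pairs `(i, j)` with `i < j`. -/
abbrev EdgeIdx (p : ℕ) := {q : Fin p × Fin p // q.1 < q.2}

lemma my_iIndepFun_reindex {Ω ι κ : Type*} [MeasurableSpace Ω] {μ : Measure Ω}
    {β : Type*} [mβ : MeasurableSpace β] {f : ι → Ω → β}
    (h : iIndepFun (m := fun _ => mβ) f μ) {e : κ → ι} (he : Function.Injective e) :
    iIndepFun (m := fun _ => mβ) (fun j => f (e j)) μ := by
  classical
  rw [iIndepFun_iff_measure_inter_preimage_eq_mul] at h ⊢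
  intro S sets H
  set sets' : ι → Set β := fun i => ⋂ j ∈ S.filter (fun j => e j = i), sets j with hsets'
  have hkey : ∀ j ∈ S, sets' (e j) = sets j := by
    intro j hj
    have hfil : S.filter (fun j' => e j' = e j) = {j} := by
      ext j'
      simp only [Finset.mem_filter, Finset.mem_singleton]
      constructor
      · rintro ⟨_, h'⟩; exact he h'
      · rintro rfl; exact ⟨hj, rfl⟩
    show ⋂ j' ∈ S.filter (fun j' => e j' = e j), sets j' = sets j
    rw [hfil]; simp
  have hmeas' : ∀ i ∈ S.image e, MeasurableSet (sets' i) := by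
    intro i _
    exact Finset.measurableSet_biInter _ (fun j hj => H j (Finset.mem_filter.mp hj).1)
  have hmain := h (S.image e) hmeas'
  have hInter : (⋂ i ∈ S.image e, f i ⁻¹' sets' i) = ⋂ j ∈ S, f (e j) ⁻¹' sets j := by
    ext ω
    simp only [Set.mem_iInter, Finset.mem_image]
    constructor
    · intro hw j hj
      have := hw (e j) ⟨j, hj, rfl⟩
      rwa [hkey j hj] at this
    · rintro hw i ⟨j, hj, rfl⟩
      rw [hkey j hj]; exact hw j hj
  have hProd : ∏ i ∈ S.image e, μ (f i ⁻¹' sets' i) = ∏ j ∈ S, μ (f (e j) ⁻¹' sets j) := by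
    rw [Finset.prod_image (fun a _ b _ hab => he hab)]
    exact Finset.prod_congr rfl fun j hj => by rw [hkey j hj]
  rw [← hInter, ← hProd]; exact hmain

lemma my_integral_prod_of_iIndepFun {Ω ι : Type*} [MeasurableSpace Ω] {μ : Measure Ω}
    [IsProbabilityMeasure μ] {f : ι → Ω → ℝ}
    (hindep : iIndepFun (m := fun _ => (inferInstance : MeasurableSpace ℝ)) f μ)
    (hmeas : ∀ i, Measurable (f i)) (hint : ∀ i, Integrable (f i) μ) (s : Finset ι) :
    Integrable (fun ω => ∏ i ∈ s, f i ω) μ ∧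
      ∫ ω, ∏ i ∈ s, f i ω ∂μ = ∏ i ∈ s, ∫ ω, f i ω ∂μ := by
  classical
  induction s using Finset.cons_induction with
  | empty => simp
  | cons a s ha ih =>
    have hiprod : IndepFun (fun ω => ∏ i ∈ s, f i ω) (f a) μ := by
      have := hindep.indepFun_finsetProd_of_notMem hmeas ha
      have heq : (∏ j ∈ s, f j) = fun ω => ∏ i ∈ s, f i ω := by
        funext ω; exact Finset.prod_apply ω s f
      rwa [heq] at this
    have hintmul : Integrable (fun ω => (∏ i ∈ s, f i ω) * f a ω) μ :=
      hiprod.integrable_mul ih.1 (hint a)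
    constructor
    · refine (hintmul.congr (ae_of_all _ fun ω => ?_))
      simp [Finset.prod_insert ha, mul_comm]
    · calc ∫ ω, ∏ i ∈ Finset.cons a s ha, f i ω ∂μ
          = ∫ ω, (∏ i ∈ s, f i ω) * f a ω ∂μ := by
            congr 1; funext ω; rw [Finset.prod_cons, mul_comm]
        _ = (∫ ω, ∏ i ∈ s, f i ω ∂μ) * ∫ ω, f a ω ∂μ :=
            hiprod.integral_mul_eq_mul_integral ih.1.aestronglyMeasurable (hint a).aestronglyMeasurable
        _ = ∏ i ∈ Finset.cons a s ha, ∫ ω, f i ω ∂μ := by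
            rw [Finset.prod_cons, mul_comm, ih.2]

lemma my_edge_integral {Ω : Type*} [MeasurableSpace Ω] (μ : Measure Ω) [IsProbabilityMeasure μ]
    (α β : ℝ) (hα0 : 0 ≤ α) (hβ1 : β ≤ 1) (a : ℝ) (ha01 : a = 0 ∨ a = 1)
    (X : Ω → ℝ) (hm : Measurable X) (h01 : ∀ ω, X ω = 0 ∨ X ω = 1)
    (hd : μ {ω | X ω = 1} = ENNReal.ofReal (if a = 1 then 1 - β else α))
    (t : ℕ) (ht : t = 0 ∨ t = 1) :
    ∫ ω, (X ω - α) ^ t * (1 - β - X ω) ^ (1 - t) ∂μ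
      = (1 - α - β) * (a ^ t * (1 - a) ^ (1 - t)) := by
  have hs : MeasurableSet {ω | X ω = 1} := hm (measurableSet_singleton 1)
  have hXind : X = Set.indicator {ω | X ω = 1} (fun _ => (1 : ℝ)) := by
    funext ω
    rcases h01 ω with h | h
    · rw [h, Set.indicator_apply, if_neg]; simp [h]
    · rw [h, Set.indicator_apply, if_pos]; exact h
  have hXint : Integrable X μ := by
    rw [hXind]; exact (integrable_const (1 : ℝ)).indicator hs
  have hEX : ∫ ω, X ω ∂μ = if a = 1 then 1 - β else α := by
    have h1 : ∫ ω, X ω ∂μ = (μ {ω | X ω = 1}).toReal :=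
      calc ∫ ω, X ω ∂μ = ∫ ω, Set.indicator {ω | X ω = 1} (fun _ => (1:ℝ)) ω ∂μ :=
            integral_congr_ae (Filter.Eventually.of_forall fun ω => congrFun hXind ω)
        _ = (μ {ω | X ω = 1}).toReal := (integral_indicator_one hs).trans (measureReal_def _ _)
    rw [h1, hd, ENNReal.toReal_ofReal]
    split_ifs <;> linarith
  have hsub1 : ∫ ω, (1 - β - X ω) ∂μ = 1 - β - ∫ ω, X ω ∂μ := by
    rw [integral_sub (integrable_const _) hXint, integral_const]
    simp
  have hsub2 : ∫ ω, (X ω - α) ∂μ = (∫ ω, X ω ∂μ) - α := by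
    rw [integral_sub hXint (integrable_const _), integral_const]
    simp
  rcases ht with rfl | rfl <;> rcases ha01 with rfl | rfl <;>
      simp only [pow_zero, pow_one, one_mul, mul_one, Nat.sub_zero, Nat.sub_self]
  · rw [hsub1, hEX]; norm_num; ring
  · rw [hsub1, hEX]; norm_num
  · rw [hsub2, hEX]; norm_num
  · rw [hsub2, hEX]; norm_num; ring

/-- Unbiasedness of the subgraph-density moment estimator with known error rates:
with `T̃_𝒱 = |𝒱|⁻¹ ∑_{v∈𝒱} ∏_ℓ φ_ℓ(Y_{i_ℓ,i_ℓ'})`, where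
`φ_ℓ(x) = (x−α)^{τ_ℓ}(1−β−x)^{1−τ_ℓ}` (convention `0⁰ = 1`), and the subgraph density
`C_𝒱 = |𝒱|⁻¹ ∑_{v∈𝒱} ∏_ℓ A_{i_ℓ,i_ℓ'}^{τ_ℓ}(1−A_{i_ℓ,i_ℓ'})^{1−τ_ℓ}`,
one has `E(T̃_𝒱) = (1−α−β)^k · C_𝒱`. -/
theorem expectation_subgraph_moment_estimator
    {Ω : Type*} [MeasurableSpace Ω] (μ : Measure Ω) [IsProbabilityMeasure μ]
    (p : ℕ) (hp : 2 ≤ p)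
    (A : Fin p → Fin p → ℝ)
    (hA01 : ∀ i j, A i j = 0 ∨ A i j = 1)
    (hAsym : ∀ i j, A i j = A j i) (hAdiag : ∀ i, A i i = 0)
    (α β : ℝ) (hα0 : 0 ≤ α) (hα1 : α ≤ 1) (hβ0 : 0 ≤ β) (hβ1 : β ≤ 1)
    (hαβ : α + β ≤ 1)
    (Y : Fin p → Fin p → Ω → ℝ)
    (hYmeas : ∀ i j, Measurable (Y i j))
    (hY01 : ∀ i j ω, Y i j ω = 0 ∨ Y i j ω = 1)
    (hYsym : ∀ i j ω, Y i j ω = Y j i ω)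
    (hYdist : ∀ i j : Fin p, i ≠ j →
      μ {ω | Y i j ω = 1} = ENNReal.ofReal (if A i j = 1 then 1 - β else α))
    -- the observed edge indicators are independent across unordered vertex pairs
    (hindep : iIndepFun (m := fun _ : EdgeIdx p => (inferInstance : MeasurableSpace ℝ))
      (fun e ω => Y e.1.1 e.1.2 ω) μ)
    (k : ℕ) (hk : 1 ≤ k)
    (V : Finset (Fin k → Fin p × Fin p)) (hVne : V.Nonempty)
    (hV : ∀ v ∈ V, (∀ ℓ, (v ℓ).1 ≠ (v ℓ).2) ∧
      ∀ ℓ₁ ℓ₂, ℓ₁ ≠ ℓ₂ →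
        (({(v ℓ₁).1, (v ℓ₁).2} ∩ {(v ℓ₂).1, (v ℓ₂).2} : Finset (Fin p)).card ≤ 1))
    (τ : Fin k → ℕ) (hτ : ∀ ℓ, τ ℓ = 0 ∨ τ ℓ = 1) :
    ∫ ω, (V.card : ℝ)⁻¹ * ∑ v ∈ V, ∏ ℓ,
        (Y (v ℓ).1 (v ℓ).2 ω - α) ^ τ ℓ * (1 - β - Y (v ℓ).1 (v ℓ).2 ω) ^ (1 - τ ℓ) ∂μ
      = (1 - α - β) ^ k *
        ((V.card : ℝ)⁻¹ * ∑ v ∈ V, ∏ ℓ,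
          (A (v ℓ).1 (v ℓ).2) ^ τ ℓ * (1 - A (v ℓ).1 (v ℓ).2) ^ (1 - τ ℓ)) := by
  classical
  have hgmeas : ∀ ℓ : Fin k,
      Measurable (fun x : ℝ => (x - α) ^ τ ℓ * (1 - β - x) ^ (1 - τ ℓ)) := fun ℓ =>
    ((measurable_id.sub measurable_const).pow_const _).mul
      ((measurable_const.sub measurable_id).pow_const _)
  have hFmeas : ∀ (v : Fin k → Fin p × Fin p) (ℓ : Fin k),
      Measurable (fun ω => (Y (v ℓ).1 (v ℓ).2 ω - α) ^ τ ℓ *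
        (1 - β - Y (v ℓ).1 (v ℓ).2 ω) ^ (1 - τ ℓ)) := fun v ℓ =>
    (hgmeas ℓ).comp (hYmeas _ _)
  have hFint : ∀ (v : Fin k → Fin p × Fin p) (ℓ : Fin k),
      Integrable (fun ω => (Y (v ℓ).1 (v ℓ).2 ω - α) ^ τ ℓ *
        (1 - β - Y (v ℓ).1 (v ℓ).2 ω) ^ (1 - τ ℓ)) μ := by
    intro v ℓ
    refine Integrable.mono' (integrable_const
        (max |((0:ℝ) - α) ^ τ ℓ * (1 - β - 0) ^ (1 - τ ℓ)|
             |((1:ℝ) - α) ^ τ ℓ * (1 - β - 1) ^ (1 - τ ℓ)|))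
      ((hFmeas v ℓ).aestronglyMeasurable) (Filter.Eventually.of_forall fun ω => ?_)
    rcases hY01 (v ℓ).1 (v ℓ).2 ω with h | h
    · rw [Real.norm_eq_abs, h]; exact le_max_left _ _
    · rw [Real.norm_eq_abs, h]; exact le_max_right _ _
  have hkey : ∀ v ∈ V,
      Integrable (fun ω => ∏ ℓ, (Y (v ℓ).1 (v ℓ).2 ω - α) ^ τ ℓ *
        (1 - β - Y (v ℓ).1 (v ℓ).2 ω) ^ (1 - τ ℓ)) μ ∧
      ∫ ω, ∏ ℓ, (Y (v ℓ).1 (v ℓ).2 ω - α) ^ τ ℓ *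
          (1 - β - Y (v ℓ).1 (v ℓ).2 ω) ^ (1 - τ ℓ) ∂μ
        = (1 - α - β) ^ k * ∏ ℓ,
          (A (v ℓ).1 (v ℓ).2) ^ τ ℓ * (1 - A (v ℓ).1 (v ℓ).2) ^ (1 - τ ℓ) := by
    intro v hv
    obtain ⟨hne, hdisj⟩ := hV v hv
    have hemk : ∀ ℓ : Fin k, ∃ e : EdgeIdx p,
        ({(v ℓ).1, (v ℓ).2} : Finset (Fin p)) = {e.1.1, e.1.2} ∧
        ∀ ω, Y e.1.1 e.1.2 ω = Y (v ℓ).1 (v ℓ).2 ω := by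
      intro ℓ
      rcases lt_or_gt_of_ne (hne ℓ) with h | h
      · exact ⟨⟨v ℓ, h⟩, rfl, fun ω => rfl⟩
      · exact ⟨⟨((v ℓ).2, (v ℓ).1), h⟩, Finset.pair_comm _ _, fun ω => hYsym _ _ ω⟩
    choose e hpair hYe using hemk
    have hinj : Function.Injective e := by
      intro ℓ₁ ℓ₂ h12
      by_contra hne12
      have h2 := hdisj ℓ₁ ℓ₂ hne12
      have hins : ({(v ℓ₁).1, (v ℓ₁).2} ∩ {(v ℓ₂).1, (v ℓ₂).2} : Finset (Fin p))
          = ({(v ℓ₁).1, (v ℓ₁).2} : Finset (Fin p)) := by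
        rw [hpair ℓ₁, hpair ℓ₂, h12, Finset.inter_self]
      rw [hins, Finset.card_pair (hne ℓ₁)] at h2
      omega
    have hind1 : iIndepFun (m := fun _ : Fin k => (inferInstance : MeasurableSpace ℝ))
        (fun ℓ ω => Y (e ℓ).1.1 (e ℓ).1.2 ω) μ := my_iIndepFun_reindex hindep hinj
    have hind2 := hind1.comp
      (fun ℓ x => (x - α) ^ τ ℓ * (1 - β - x) ^ (1 - τ ℓ)) hgmeas
    have hind3 : iIndepFun (m := fun _ : Fin k => (inferInstance : MeasurableSpace ℝ))
        (fun ℓ ω => (Y (v ℓ).1 (v ℓ).2 ω - α) ^ τ ℓ *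
          (1 - β - Y (v ℓ).1 (v ℓ).2 ω) ^ (1 - τ ℓ)) μ := by
      have heqf : (fun ℓ => (fun x => (x - α) ^ τ ℓ * (1 - β - x) ^ (1 - τ ℓ)) ∘
            (fun ω => Y (e ℓ).1.1 (e ℓ).1.2 ω))
          = fun ℓ ω => (Y (v ℓ).1 (v ℓ).2 ω - α) ^ τ ℓ *
            (1 - β - Y (v ℓ).1 (v ℓ).2 ω) ^ (1 - τ ℓ) := by
        funext ℓ ω
        simp [Function.comp, hYe ℓ ω]
      rwa [heqf] at hind2
    obtain ⟨hint, heq⟩ := my_integral_prod_of_iIndepFun hind3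
      (fun ℓ => hFmeas v ℓ) (fun ℓ => hFint v ℓ) Finset.univ
    refine ⟨hint, ?_⟩
    rw [heq]
    have hterm : ∀ ℓ : Fin k,
        ∫ ω, (Y (v ℓ).1 (v ℓ).2 ω - α) ^ τ ℓ *
            (1 - β - Y (v ℓ).1 (v ℓ).2 ω) ^ (1 - τ ℓ) ∂μ
          = (1 - α - β) * ((A (v ℓ).1 (v ℓ).2) ^ τ ℓ *
              (1 - A (v ℓ).1 (v ℓ).2) ^ (1 - τ ℓ)) := fun ℓ =>
      my_edge_integral μ α β hα0 hβ1 _ (hA01 _ _) _ (hYmeas _ _) (hY01 _ _)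
        (hYdist _ _ (hne ℓ)) _ (hτ ℓ)
    calc ∏ ℓ, ∫ ω, (Y (v ℓ).1 (v ℓ).2 ω - α) ^ τ ℓ *
            (1 - β - Y (v ℓ).1 (v ℓ).2 ω) ^ (1 - τ ℓ) ∂μ
        = ∏ ℓ, (1 - α - β) * ((A (v ℓ).1 (v ℓ).2) ^ τ ℓ *
            (1 - A (v ℓ).1 (v ℓ).2) ^ (1 - τ ℓ)) :=
          Finset.prod_congr rfl fun ℓ _ => hterm ℓ
      _ = (1 - α - β) ^ k * ∏ ℓ,
            (A (v ℓ).1 (v ℓ).2) ^ τ ℓ * (1 - A (v ℓ).1 (v ℓ).2) ^ (1 - τ ℓ) := by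
          rw [Finset.prod_mul_distrib, Finset.prod_const, Finset.card_univ,
            Fintype.card_fin]
  rw [MeasureTheory.integral_const_mul,
    integral_finset_sum V (fun v hv => (hkey v hv).1),
    Finset.sum_congr rfl (fun v hv => (hkey v hv).2), ← Finset.mul_sum]
  ring
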